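/- There exist real constants A₁, A₂ and strictly positive constants B₁, B₂ such that for all x with 0 < x ≤ c, A₁ + B₁·x^{−d} ≤ F(x) ≤ A₂ + B₂·x^{−d}. -/

import Mathlib

open MeasureTheory Set

lemma image_const_mul_Ioc' {ρ a b : ℝ} (hρ : 0 < ρ) :
    (fun x => ρ * x) '' Set.Ioc a b = Set.Ioc (ρ * a) (ρ * b) := by
  ext y
  simp only [Set.mem_image, Set.mem_Ioc]
  constructor
  · rintro ⟨x, ⟨h1, h2⟩, rfl⟩
    exact ⟨by nlinarith, by nlinarith⟩
  · rintro ⟨h1, h2⟩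
    refine ⟨y / ρ, ⟨?_, ?_⟩, by field_simp⟩
    · rw [lt_div_iff₀ hρ]; nlinarith
    · rw [div_le_iff₀ hρ]; nlinarith

/-- There exist real constants `A₁, A₂` and strictly positive constants
`B₁, B₂` such that for all `x` with `0 < x ≤ c`,
`A₁ + B₁·x^{−d} ≤ F(x) ≤ A₂ + B₂·x^{−d}`. -/
theorem ph_self_similar_F_bounds
    (ρ ℓ c : ℝ) (hρ : ρ ∈ Set.Ioo (0 : ℝ) 1) (hℓ : 1 < ℓ) (hc : 0 < c)
    (μ : Measure ℝ)
    (hfin : ∀ x : ℝ, 0 < x → μ (Set.Ici x) < ⊤)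
    (hpos : 0 < μ (Set.Ioc (ρ * c) c))
    (hscale : ∀ A : Set ℝ, MeasurableSet A → A ⊆ Set.Ioc 0 c →
      μ ((fun a => ρ * a) '' A) = ENNReal.ofReal ℓ * μ A)
    (F : ℝ → ℝ) (hF : ∀ x : ℝ, F x = (μ (Set.Ici x)).toReal)
    (d : ℝ) (hd : d = Real.log ℓ / Real.log (1 / ρ)) :
    ∃ A₁ A₂ B₁ B₂ : ℝ, 0 < B₁ ∧ 0 < B₂ ∧
      ∀ x : ℝ, 0 < x → x ≤ c →
        A₁ + B₁ * x ^ (-d) ≤ F x ∧ F x ≤ A₂ + B₂ * x ^ (-d) := by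
  obtain ⟨hρ0, hρ1⟩ := hρ
  have hℓ0 : (0:ℝ) < ℓ := lt_trans one_pos hℓ
  have hE : (0:ℝ) < ℓ - 1 := by linarith
  have hlogρ : Real.log ρ < 0 := Real.log_neg hρ0 hρ1
  have hne : Real.log ρ ≠ 0 := hlogρ.ne
  -- ρ^(-d) = ℓ
  have hρd : ρ ^ (-d) = ℓ := by
    rw [Real.rpow_def_of_pos hρ0]
    have hdneg : -d = Real.log ℓ / Real.log ρ := by
      rw [hd, one_div, Real.log_inv, div_neg, neg_neg]
    have h1 : Real.log ρ * (-d) = Real.log ℓ := by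
      rw [hdneg]; field_simp
    rw [h1, Real.exp_log hℓ0]
  have hd0 : 0 < d := by
    rw [hd]
    apply div_pos (Real.log_pos hℓ)
    rw [one_div, Real.log_inv]; linarith
  -- (ρ^n * c)^(-d) = ℓ^n * c^(-d)
  have hpow : ∀ n : ℕ, ((ρ^n * c) : ℝ) ^ (-d) = ℓ^n * c^(-d) := by
    intro n
    rw [Real.mul_rpow (by positivity) hc.le, ← Real.rpow_natCast ρ n,
      ← Real.rpow_mul hρ0.le, mul_comm (n:ℝ) (-d), Real.rpow_mul hρ0.le, hρd,
      Real.rpow_natCast]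
  have hcd : (0:ℝ) < c ^ (-d) := Real.rpow_pos_of_pos hc _
  have hcd' : (0:ℝ) < c ^ d := Real.rpow_pos_of_pos hc _
  have hcdd : c ^ d * c ^ (-d) = 1 := by
    rw [← Real.rpow_add hc]; simp
  -- finiteness facts
  have hfinIoc : ∀ a b : ℝ, 0 < a → μ (Set.Ioc a b) < ⊤ :=
    fun a b ha => lt_of_le_of_lt (measure_mono (fun y hy => le_of_lt hy.1)) (hfin a ha)
  -- constants
  set M : ℝ := (μ (Set.Ioc (ρ * c) c)).toReal with hMdef
  set C : ℝ := (μ (Set.Ioi c)).toReal with hCdef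
  have hM : 0 < M :=
    ENNReal.toReal_pos hpos.ne' (hfinIoc _ _ (by positivity)).ne
  -- g : measure of Ioc (ρ^k c) c
  set g : ℕ → ℝ := fun k => (μ (Set.Ioc (ρ^k * c) c)).toReal with hgdef
  have hgrec : ∀ k : ℕ, g (k+1) = ℓ * g k + M := by
    intro k
    have h1 : ρ^(k+1) * c ≤ ρ * c := by
      have : ρ^(k+1) ≤ ρ := by
        calc ρ^(k+1) ≤ ρ^1 := pow_le_pow_of_le_one hρ0.le hρ1.le (by omega)
        _ = ρ := pow_one ρ
      nlinarith
    have h2 : ρ * c ≤ c := by nlinarith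
    have hsplit : Set.Ioc (ρ^(k+1) * c) c
        = Set.Ioc (ρ^(k+1) * c) (ρ * c) ∪ Set.Ioc (ρ * c) c :=
      (Set.Ioc_union_Ioc_eq_Ioc h1 h2).symm
    have hdisj : Disjoint (Set.Ioc (ρ^(k+1) * c) (ρ * c)) (Set.Ioc (ρ * c) c) :=
      Set.Ioc_disjoint_Ioc_of_le le_rfl
    have himg : Set.Ioc (ρ^(k+1) * c) (ρ * c)
        = (fun x => ρ * x) '' Set.Ioc (ρ^k * c) c := by
      rw [image_const_mul_Ioc' hρ0]
      ring_nf
    have hsc : μ (Set.Ioc (ρ^(k+1) * c) (ρ * c))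
        = ENNReal.ofReal ℓ * μ (Set.Ioc (ρ^k * c) c) := by
      rw [himg]
      exact hscale _ measurableSet_Ioc
        (fun y hy => ⟨lt_trans (by positivity) hy.1, hy.2⟩)
    have hmeas : μ (Set.Ioc (ρ^(k+1) * c) c)
        = ENNReal.ofReal ℓ * μ (Set.Ioc (ρ^k * c) c) + μ (Set.Ioc (ρ * c) c) := by
      rw [hsplit, measure_union hdisj measurableSet_Ioc, hsc]
    have hfk : μ (Set.Ioc (ρ^k * c) c) ≠ ⊤ := (hfinIoc _ _ (by positivity)).ne
    have hfm : μ (Set.Ioc (ρ * c) c) ≠ ⊤ := (hfinIoc _ _ (by positivity)).ne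
    simp only [hgdef, hmeas]
    rw [ENNReal.toReal_add (ENNReal.mul_ne_top ENNReal.ofReal_ne_top hfk) hfm,
      ENNReal.toReal_mul, ENNReal.toReal_ofReal hℓ0.le]
  have hgform : ∀ k : ℕ, g k = M * (ℓ^k - 1) / (ℓ - 1) := by
    intro k
    induction k with
    | zero => simp [hgdef]
    | succ n ih =>
      rw [hgrec n, ih]
      field_simp
      ring
  -- main bounds
  refine ⟨-(M / (ℓ - 1)), C, M * c^d / ((ℓ - 1) * ℓ), M * ℓ * c^d / (ℓ - 1),
    by positivity, by positivity, ?_⟩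
  intro x hx hxc
  -- find k with ρ^(k+1)*c < x ≤ ρ^k*c
  obtain ⟨k, hk1, hk2⟩ : ∃ k : ℕ, ρ^(k+1) * c < x ∧ x ≤ ρ^k * c := by
    have hex : ∃ n : ℕ, ρ^(n+1) * c < x := by
      obtain ⟨n, hn⟩ := exists_pow_lt_of_lt_one (div_pos hx hc) hρ1
      have h2 : ρ^n * c < x := by
        have := (lt_div_iff₀ hc).mp hn
        linarith
      have h1 : ρ^(n+1) ≤ ρ^n := pow_le_pow_of_le_one hρ0.le hρ1.le (by omega)
      exact ⟨n, by nlinarith⟩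
    refine ⟨Nat.find hex, Nat.find_spec hex, ?_⟩
    rcases Nat.eq_zero_or_pos (Nat.find hex) with h0 | hpos'
    · rw [h0]; simpa using hxc
    · have hm := Nat.find_min hex (m := Nat.find hex - 1) (by omega)
      push_neg at hm
      have he : Nat.find hex - 1 + 1 = Nat.find hex := by omega
      rwa [he] at hm
  -- rpow bounds
  have hxd1 : x ^ (-d) ≤ ℓ^(k+1) * c^(-d) := by
    rw [← hpow (k+1)]
    exact Real.rpow_le_rpow_of_nonpos (by positivity) hk1.le (by linarith)
  have hxd2 : ℓ^k * c^(-d) ≤ x ^ (-d) := by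
    rw [← hpow k]
    exact Real.rpow_le_rpow_of_nonpos hx hk2 (by linarith)
  have hxdpos : 0 < x ^ (-d) := Real.rpow_pos_of_pos hx _
  constructor
  · -- lower bound
    have hsub : Set.Ioc (ρ^k * c) c ⊆ Set.Ici x :=
      fun y hy => le_of_lt (lt_of_le_of_lt hk2 hy.1)
    have hFg : g k ≤ F x := by
      rw [hF]
      exact ENNReal.toReal_mono (hfin x hx).ne (measure_mono hsub)
    have hgl : M * (ℓ^k - 1) / (ℓ - 1) ≤ F x := by rw [← hgform]; exact hFg
    refine le_trans ?_ hgl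
    have e2 : M * c^d * x^(-d) ≤ M * ℓ^(k+1) := by
      calc M * c^d * x^(-d) ≤ M * c^d * (ℓ^(k+1) * c^(-d)) :=
            mul_le_mul_of_nonneg_left hxd1 (by positivity)
        _ = M * ℓ^(k+1) * (c^d * c^(-d)) := by ring
        _ = M * ℓ^(k+1) := by rw [hcdd, mul_one]
    have e3 : M * ℓ^(k+1) / ((ℓ-1)*ℓ) = M * ℓ^k / (ℓ-1) := by
      rw [pow_succ]; field_simp
    have goal2 : M * c^d / ((ℓ-1)*ℓ) * x^(-d) ≤ M * ℓ^k / (ℓ-1) := by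
      rw [div_mul_eq_mul_div, ← e3]
      exact div_le_div_of_nonneg_right e2 (by positivity) |>.trans_eq rfl
    have e4 : M * (ℓ^k - 1) / (ℓ-1) = M * ℓ^k / (ℓ-1) - M / (ℓ-1) := by
      field_simp
    linarith
  · -- upper bound
    have hsub : Set.Ici x ⊆ Set.Ioi (ρ^(k+1) * c) := fun y hy => lt_of_lt_of_le hk1 hy
    have hIoi : Set.Ioi (ρ^(k+1) * c) = Set.Ioc (ρ^(k+1) * c) c ∪ Set.Ioi c :=
      (Set.Ioc_union_Ioi_eq_Ioi (by nlinarith)).symm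
    have hμ : μ (Set.Ici x) ≤ μ (Set.Ioc (ρ^(k+1) * c) c) + μ (Set.Ioi c) := by
      calc μ (Set.Ici x) ≤ μ (Set.Ioi (ρ^(k+1) * c)) := measure_mono hsub
      _ ≤ _ := by rw [hIoi]; exact measure_union_le _ _
    have hCfin : μ (Set.Ioi c) ≠ ⊤ :=
      (lt_of_le_of_lt (measure_mono Set.Ioi_subset_Ici_self) (hfin c hc)).ne
    have hFu : F x ≤ g (k+1) + C := by
      rw [hF]
      calc (μ (Set.Ici x)).toReal
          ≤ (μ (Set.Ioc (ρ^(k+1) * c) c) + μ (Set.Ioi c)).toReal :=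
            ENNReal.toReal_mono
              (ENNReal.add_ne_top.mpr ⟨(hfinIoc _ _ (by positivity)).ne, hCfin⟩) hμ
        _ = g (k+1) + C := by
            rw [ENNReal.toReal_add (hfinIoc _ _ (by positivity)).ne hCfin]
    refine le_trans hFu ?_
    rw [hgform]
    have e2 : M * ℓ^(k+1) ≤ M * ℓ * c^d * x^(-d) := by
      calc M * ℓ^(k+1) = M * ℓ * c^d * (ℓ^k * c^(-d)) := by
            rw [show M * ℓ * c^d * (ℓ^k * c^(-d)) = M * (ℓ * ℓ^k) * (c^d * c^(-d)) by ring,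
              hcdd, mul_one, ← pow_succ']
        _ ≤ M * ℓ * c^d * x^(-d) := mul_le_mul_of_nonneg_left hxd2 (by positivity)
    have goal2 : M * (ℓ^(k+1) - 1) / (ℓ-1) ≤ M * ℓ * c^d / (ℓ-1) * x^(-d) := by
      rw [div_mul_eq_mul_div]
      apply div_le_div_of_nonneg_right ?_ hE.le
      nlinarith
    linarith
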